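/- Let p : [0,1] → ℝ be continuous and strictly positive, let λ ∈ ℝ, and let u : [0,1] → ℝ be twice continuously differentiable with u(0) = u(1) = 0, u strictly positive on (0,1), and −u''(x) = λ·p(x)·u(x) for all x ∈ [0,1]. If λ = π² · max_{x ∈ [0,1]} ( 1/p(x) ), then λ ≠ 0 and p(x) = π²/λ for all x ∈ [0,1] (so p is constant). -/

import Mathlib

open Real

/-- Dirichlet corollary of the 'max' Ambarzumyan-type theorem with
comparison density p̃ ≡ 1 (lowest Dirichlet eigenvalue π²). -/
theorem stmt_4 (p : ℝ → ℝ) (hp : Continuous p)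
    (hppos : ∀ x ∈ Set.Icc (0:ℝ) 1, 0 < p x)
    (l : ℝ) (u : ℝ → ℝ) (hu : ContDiff ℝ 2 u)
    (hu0 : u 0 = 0) (hu1 : u 1 = 0)
    (hupos : ∀ x ∈ Set.Ioo (0:ℝ) 1, 0 < u x)
    (hode : ∀ x ∈ Set.Icc (0:ℝ) 1, -(deriv (deriv u) x) = l * p x * u x)
    (M : ℝ) (hM : IsGreatest ((fun x => 1 / p x) '' Set.Icc (0:ℝ) 1) M)
    (hl : l = Real.pi ^ 2 * M) :
    l ≠ 0 ∧ ∀ x ∈ Set.Icc (0:ℝ) 1, p x = Real.pi ^ 2 / l := by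
  -- M > 0
  obtain ⟨x₀, hx₀, hx₀M⟩ := hM.1
  have hMpos : 0 < M := hx₀M ▸ one_div_pos.mpr (hppos x₀ hx₀)
  have hpi2 : (0:ℝ) < Real.pi ^ 2 := by positivity
  have hlpos : 0 < l := hl ▸ mul_pos hpi2 hMpos
  -- l * p x ≥ π² on Icc
  have hkey : ∀ x ∈ Set.Icc (0:ℝ) 1, Real.pi ^ 2 ≤ l * p x := by
    intro x hx
    have h1 : 1 / p x ≤ M := hM.2 ⟨x, hx, rfl⟩
    have hpx := hppos x hx
    have : 1 ≤ M * p x := by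
      rw [div_le_iff₀ hpx] at h1; linarith
    calc Real.pi ^ 2 = Real.pi ^ 2 * 1 := by ring
      _ ≤ Real.pi ^ 2 * (M * p x) := by nlinarith
      _ = l * p x := by rw [hl]; ring
  -- regularity of u
  have hu2 : ContDiff ℝ ((1:ℕ) + 1) u := by exact_mod_cast hu
  have hu' : Differentiable ℝ u := hu2.differentiable (by norm_num)
  have hu'' : Differentiable ℝ (deriv u) :=
    ((contDiff_succ_iff_deriv.mp hu2).2.2).differentiable (by norm_num)
  -- the Wronskian with sin(πx)
  set W : ℝ → ℝ := fun x => deriv u x * Real.sin (Real.pi * x)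
      - u x * (Real.pi * Real.cos (Real.pi * x)) with hWdef
  have hsin : ∀ x : ℝ, HasDerivAt (fun y => Real.sin (Real.pi * y))
      (Real.pi * Real.cos (Real.pi * x)) x := by
    intro x
    have h := (Real.hasDerivAt_sin (Real.pi * x)).comp x
      ((hasDerivAt_id x).const_mul Real.pi)
    simp only [Function.comp_def] at h
    exact h.congr_deriv (by ring)
  have hcos : ∀ x : ℝ, HasDerivAt (fun y => Real.pi * Real.cos (Real.pi * y))
      (-(Real.pi ^ 2 * Real.sin (Real.pi * x))) x := by
    intro x
    have := ((Real.hasDerivAt_cos (Real.pi * x)).comp x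
      ((hasDerivAt_id x).const_mul Real.pi)).const_mul Real.pi
    exact this.congr_deriv (by ring)
  have hW : ∀ x : ℝ, HasDerivAt W
      (deriv (deriv u) x * Real.sin (Real.pi * x)
        + Real.pi ^ 2 * (u x * Real.sin (Real.pi * x))) x := by
    intro x
    have h1 := ((hu'' x).hasDerivAt.mul (hsin x)).sub
      ((hu' x).hasDerivAt.mul (hcos x))
    exact h1.congr_deriv (by ring)
  -- W antitone on [0,1]
  have hderivW : ∀ x, deriv W x = deriv (deriv u) x * Real.sin (Real.pi * x)
        + Real.pi ^ 2 * (u x * Real.sin (Real.pi * x)) := fun x => (hW x).deriv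
  have hWanti : AntitoneOn W (Set.Icc 0 1) := by
    apply antitoneOn_of_deriv_nonpos (convex_Icc 0 1)
    · have hc1 : Continuous (deriv u) := hu''.continuous
      have hc2 : Continuous u := hu'.continuous
      exact Continuous.continuousOn (by fun_prop)
    · intro x _; exact (hW x).differentiableAt.differentiableWithinAt
    · intro x hx
      rw [interior_Icc] at hx
      rw [hderivW x]
      have hode' := hode x (Set.mem_Icc_of_Ioo hx)
      have : deriv (deriv u) x = -(l * p x * u x) := by linarith
      rw [this]
      have hsinpos : 0 < Real.sin (Real.pi * x) :=
        Real.sin_pos_of_pos_of_lt_pi (mul_pos Real.pi_pos hx.1)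
          (by nlinarith [hx.2, Real.pi_pos])
      have hux := hupos x hx
      have hge := hkey x (Set.mem_Icc_of_Ioo hx)
      nlinarith [mul_le_mul_of_nonneg_right hge (mul_pos hux hsinpos).le]
  -- W vanishes at the endpoints hence on [0,1]
  have hW0 : W 0 = 0 := by simp [hWdef, hu0]
  have hW1 : W 1 = 0 := by simp [hWdef, hu1, Real.sin_pi, mul_one]
  have hWzero : ∀ x ∈ Set.Icc (0:ℝ) 1, W x = 0 := by
    intro x hx
    have h1 : W x ≤ W 0 := hWanti (Set.left_mem_Icc.mpr one_pos.le) hx hx.1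
    have h2 : W 1 ≤ W x := hWanti hx (Set.right_mem_Icc.mpr one_pos.le) hx.2
    rw [hW0] at h1; rw [hW1] at h2; linarith
  -- hence W' = 0 on the interior, giving p = π²/l there
  have hmain : ∀ x ∈ Set.Ioo (0:ℝ) 1, p x = Real.pi ^ 2 / l := by
    intro x hx
    have hnhds : (fun _ : ℝ => (0:ℝ)) =ᶠ[nhds x] W := by
      filter_upwards [isOpen_Ioo.mem_nhds hx] with y hy
      exact (hWzero y (Set.mem_Icc_of_Ioo hy)).symm
    have h0 : deriv (deriv u) x * Real.sin (Real.pi * x)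
        + Real.pi ^ 2 * (u x * Real.sin (Real.pi * x)) = 0 :=
      ((hW x).congr_of_eventuallyEq hnhds).unique (hasDerivAt_const x (0:ℝ))
    have hode' := hode x (Set.mem_Icc_of_Ioo hx)
    have h2 : deriv (deriv u) x = -(l * p x * u x) := by linarith
    rw [h2] at h0
    have hsinpos : 0 < Real.sin (Real.pi * x) :=
      Real.sin_pos_of_pos_of_lt_pi (mul_pos Real.pi_pos hx.1)
        (by nlinarith [hx.2, Real.pi_pos])
    have hux := hupos x hx
    have hlp : l * p x = Real.pi ^ 2 := by
      have hprod : (Real.pi ^ 2 - l * p x) * (u x * Real.sin (Real.pi * x)) = 0 := by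
        linarith [h0]
      have := mul_pos hux hsinpos
      rcases mul_eq_zero.mp hprod with h | h
      · linarith
      · exact absurd h (by positivity)
    field_simp
    linarith [hlp]
  -- extend to the closed interval by continuity
  refine ⟨ne_of_gt hlpos, ?_⟩
  have hclosure : Set.EqOn p (fun _ => Real.pi ^ 2 / l) (closure (Set.Ioo (0:ℝ) 1)) :=
    (Set.EqOn.closure (fun x hx => hmain x hx) hp continuous_const)
  intro x hx
  have : x ∈ closure (Set.Ioo (0:ℝ) 1) := by
    rw [closure_Ioo (by norm_num : (0:ℝ) ≠ 1)]; exact hx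
  exact hclosure this
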